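/- For a finite simple graph G, the number of ordered even-even partitions of V(G) (i.e., subsets V₁ ⊆ V(G) such that both G[V₁] and G[V(G)\V₁] have all degrees even) equals the number of odd-parity covers of the odd-extension G̅ of G. -/

import Mathlib

/-- The odd-extension of a graph `G`: to each vertex of even degree we attach a new
pendant vertex adjacent only to it. -/
def oddExtension {V : Type*} [Fintype V] [DecidableEq V]
    (G : SimpleGraph V) [DecidableRel G.Adj] :
    SimpleGraph (V ⊕ {v : V // Even (G.degree v)}) where
  Adj x y :=
    match x, y with
    | Sum.inl u, Sum.inl w => G.Adj u w
    | Sum.inl u, Sum.inr v => u = v.1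
    | Sum.inr v, Sum.inl u => v.1 = u
    | Sum.inr _, Sum.inr _ => False
  symm := by
    constructor
    rintro (u | v) (w | v') h
    · exact G.adj_symm h
    · exact h.symm
    · exact h.symm
    · exact h
  loopless := by
    constructor
    rintro (u | v) h
    · exact G.loopless.irrefl u h
    · exact h

/-!
An odd-parity cover `Q` of the odd extension is determined by its trace `W` on `V`: the closed
neighbourhood of the pendant vertex `v'` is `{v, v'}`, so `v' ∈ Q` exactly when `v ∉ W`. With
this forced choice the parity condition at `v ∈ W` says that `|N(v) ∩ W|` is even, and at
`v ∉ W` it says that `|N(v) ∩ W| + [deg v even]` is odd, i.e. that `|N(v) \ W|` is even.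
So `Q ↦ Q ∩ V` is a bijection onto the even-even partitions.
-/

lemma Set.ncard_eq_ncard_preimage_inl_add_ncard_preimage_inr {α β : Type*} [Finite α] [Finite β]
    (s : Set (α ⊕ β)) : s.ncard = (Sum.inl ⁻¹' s).ncard + (Sum.inr ⁻¹' s).ncard := by
  conv_lhs => rw [← Set.image_preimage_inl_union_image_preimage_inr s]
  rw [Set.ncard_union_eq Set.disjoint_image_inl_image_inr,
    Set.ncard_image_of_injective _ Sum.inl_injective,
    Set.ncard_image_of_injective _ Sum.inr_injective]

lemma Set.ncard_singleton_inter_eq_ite {α : Type*} (a : α) (s : Set α) [Decidable (a ∈ s)] :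
    ({a} ∩ s).ncard = if a ∈ s then 1 else 0 := by
  split_ifs with h
  · rw [Set.singleton_inter_of_mem h, Set.ncard_singleton]
  · rw [Set.singleton_inter_of_notMem h, Set.ncard_empty]

lemma Set.ncard_setOf_subtype_val_eq {α : Type*} {p : α → Prop} (a : α) [Decidable (p a)] :
    {x : Subtype p | x.1 = a}.ncard = if p a then 1 else 0 := by
  split_ifs with h
  · rw [show {x : Subtype p | x.1 = a} = {⟨a, h⟩} from
      Set.ext fun x => (Subtype.ext_iff (a2 := ⟨a, h⟩)).symm, Set.ncard_singleton]
  · rw [show {x : Subtype p | x.1 = a} = ∅ from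
      Set.eq_empty_of_forall_notMem fun x (hx : x.1 = a) => h (hx ▸ x.2), Set.ncard_empty]

lemma Nat.odd_add_ite_even_iff {a b : ℕ} :
    Odd (a + if Even (a + b) then 1 else 0) ↔ Even b := by
  by_cases h : Even (a + b) <;> simp only [h, if_true, if_false] <;> grind

namespace SimpleGraph

variable {V : Type*}

def IsOddParityCover (H : SimpleGraph V) (Q : Set V) : Prop :=
  ∀ x, Odd (((H.neighborSet x ∪ {x}) ∩ Q).ncard)

def InducesEvenDegrees (G : SimpleGraph V) (W : Set V) : Prop :=
  ∀ v ∈ W, Even ((W ∩ G.neighborSet v).ncard)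

lemma ncard_inter_neighborSet_add_ncard_compl_inter_neighborSet (G : SimpleGraph V) [Fintype V]
    [DecidableRel G.Adj] (W : Set V) (v : V) :
    (W ∩ G.neighborSet v).ncard + (Wᶜ ∩ G.neighborSet v).ncard = G.degree v := by
  rw [Set.inter_comm W, ← Set.sdiff_eq_compl_inter,
    Set.ncard_inter_add_ncard_sdiff_eq_ncard, ← G.card_neighborSet_eq_degree,
    Set.fintypeCard_eq_ncard]

end SimpleGraph

namespace oddExtension

variable {V : Type*} [Fintype V] (G : SimpleGraph V) [DecidableRel G.Adj]

def extendSet (W : Set V) : Set (V ⊕ {v : V // Even (G.degree v)}) :=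
  {x | Sum.elim (· ∈ W) (·.1 ∉ W) x}

lemma preimage_inl_extendSet (W : Set V) : Sum.inl ⁻¹' extendSet G W = W := rfl

lemma preimage_inr_extendSet (W : Set V) :
    Sum.inr ⁻¹' extendSet G W = {w | w.1 ∉ W} := rfl

variable [DecidableEq V]

lemma preimage_inl_closedNbhd_inl (v : V) :
    Sum.inl ⁻¹' ((oddExtension G).neighborSet (.inl v) ∪ {.inl v}) =
      insert v (G.neighborSet v) := by
  ext u; simp [oddExtension]

lemma preimage_inr_closedNbhd_inl (v : V) :
    Sum.inr ⁻¹' ((oddExtension G).neighborSet (.inl v) ∪ {.inl v}) = {w | w.1 = v} := by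
  ext w; simp [oddExtension, eq_comm]

lemma preimage_inl_closedNbhd_inr (w : {v : V // Even (G.degree v)}) :
    Sum.inl ⁻¹' ((oddExtension G).neighborSet (.inr w) ∪ {.inr w}) = {w.1} := by
  ext u; simp [oddExtension, eq_comm]

lemma preimage_inr_closedNbhd_inr (w : {v : V // Even (G.degree v)}) :
    Sum.inr ⁻¹' ((oddExtension G).neighborSet (.inr w) ∪ {.inr w}) = {w} := by
  ext w; simp [oddExtension]

lemma odd_ncard_closedNbhd_inr_inter_iff (Q : Set (V ⊕ {v : V // Even (G.degree v)}))
    (w : {v : V // Even (G.degree v)}) :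
    Odd ((((oddExtension G).neighborSet (.inr w) ∪ {.inr w}) ∩ Q).ncard) ↔
      (Sum.inr w ∈ Q ↔ Sum.inl w.1 ∉ Q) := by
  classical
  rw [Set.ncard_eq_ncard_preimage_inl_add_ncard_preimage_inr, Set.preimage_inter,
    Set.preimage_inter, preimage_inl_closedNbhd_inr, preimage_inr_closedNbhd_inr,
    Set.ncard_singleton_inter_eq_ite, Set.ncard_singleton_inter_eq_ite]
  by_cases hl : Sum.inl w.1 ∈ Q <;> by_cases hr : Sum.inr w ∈ Q <;> simp [hl, hr]

lemma ncard_closedNbhd_inl_inter (Q : Set (V ⊕ {v : V // Even (G.degree v)})) (v : V) :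
    (((oddExtension G).neighborSet (.inl v) ∪ {.inl v}) ∩ Q).ncard =
      (insert v (G.neighborSet v) ∩ Sum.inl ⁻¹' Q).ncard +
        ({w | w.1 = v} ∩ Sum.inr ⁻¹' Q).ncard := by
  rw [Set.ncard_eq_ncard_preimage_inl_add_ncard_preimage_inr, Set.preimage_inter,
    Set.preimage_inter, preimage_inl_closedNbhd_inl, preimage_inr_closedNbhd_inl]

lemma ncard_closedNbhd_inl_inter_extendSet_of_mem {W : Set V} {v : V} (hv : v ∈ W) :
    (((oddExtension G).neighborSet (.inl v) ∪ {.inl v}) ∩ extendSet G W).ncard =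
      (W ∩ G.neighborSet v).ncard + 1 := by
  have hpendant : {w : {v : V // Even (G.degree v)} | w.1 = v} ∩ {w | w.1 ∉ W} = ∅ :=
    Set.eq_empty_of_forall_notMem fun w ⟨(hw : w.1 = v), (hw' : w.1 ∉ W)⟩ => hw' (hw ▸ hv)
  rw [ncard_closedNbhd_inl_inter, preimage_inl_extendSet, preimage_inr_extendSet, hpendant,
    Set.insert_inter_of_mem hv, Set.ncard_empty,
    Set.ncard_insert_of_notMem (fun h => G.notMem_neighborSet_self h.1), Set.inter_comm]

lemma ncard_closedNbhd_inl_inter_extendSet_of_notMem {W : Set V} {v : V} (hv : v ∉ W) :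
    (((oddExtension G).neighborSet (.inl v) ∪ {.inl v}) ∩ extendSet G W).ncard =
      (W ∩ G.neighborSet v).ncard + if Even (G.degree v) then 1 else 0 := by
  have hpendant : {w : {v : V // Even (G.degree v)} | w.1 = v} ∩ {w | w.1 ∉ W} =
      {w | w.1 = v} :=
    Set.inter_eq_left.2 fun w (hw : w.1 = v) => show w.1 ∉ W from hw ▸ hv
  rw [ncard_closedNbhd_inl_inter, preimage_inl_extendSet, preimage_inr_extendSet, hpendant,
    Set.insert_inter_of_notMem hv, Set.ncard_setOf_subtype_val_eq, Set.inter_comm]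

lemma odd_ncard_closedNbhd_inl_inter_extendSet_iff_of_mem {W : Set V} {v : V} (hv : v ∈ W) :
    Odd ((((oddExtension G).neighborSet (.inl v) ∪ {.inl v}) ∩ extendSet G W).ncard) ↔
      Even ((W ∩ G.neighborSet v).ncard) := by
  rw [ncard_closedNbhd_inl_inter_extendSet_of_mem G hv, Nat.odd_add_one, Nat.not_odd_iff_even]

lemma odd_ncard_closedNbhd_inl_inter_extendSet_iff_of_notMem {W : Set V} {v : V} (hv : v ∉ W) :
    Odd ((((oddExtension G).neighborSet (.inl v) ∪ {.inl v}) ∩ extendSet G W).ncard) ↔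
      Even ((Wᶜ ∩ G.neighborSet v).ncard) := by
  rw [ncard_closedNbhd_inl_inter_extendSet_of_notMem G hv,
    ← G.ncard_inter_neighborSet_add_ncard_compl_inter_neighborSet W v, Nat.odd_add_ite_even_iff]

lemma isOddParityCover_extendSet_iff (W : Set V) :
    (oddExtension G).IsOddParityCover (extendSet G W) ↔
      G.InducesEvenDegrees W ∧ G.InducesEvenDegrees Wᶜ := by
  constructor
  · intro hcover
    exact ⟨fun v hv => (odd_ncard_closedNbhd_inl_inter_extendSet_iff_of_mem G hv).1 (hcover _),
      fun v hv => (odd_ncard_closedNbhd_inl_inter_extendSet_iff_of_notMem G hv).1 (hcover _)⟩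
  · rintro ⟨hW, hWc⟩ (v | w)
    · by_cases hv : v ∈ W
      · exact (odd_ncard_closedNbhd_inl_inter_extendSet_iff_of_mem G hv).2 (hW v hv)
      · exact (odd_ncard_closedNbhd_inl_inter_extendSet_iff_of_notMem G hv).2 (hWc v hv)
    · exact (odd_ncard_closedNbhd_inr_inter_iff G _ w).2 Iff.rfl

lemma extendSet_preimage_inl {Q : Set (V ⊕ {v : V // Even (G.degree v)})}
    (hQ : (oddExtension G).IsOddParityCover Q) : extendSet G (Sum.inl ⁻¹' Q) = Q := by
  ext (v | w)
  · rfl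
  · exact ((odd_ncard_closedNbhd_inr_inter_iff G Q w).1 (hQ _)).symm

end oddExtension

/-- the number of even-even partitions of `G` (subsets `V₁` such that both
`G[V₁]` and `G[V₁ᶜ]` have all degrees even) equals the number of odd-parity covers of
the odd-extension of `G`. -/
theorem stmt_5 {V : Type*} [Fintype V] [DecidableEq V]
    (G : SimpleGraph V) [DecidableRel G.Adj] :
    Nat.card {V₁ : Set V //
        (∀ v ∈ V₁, Even ((V₁ ∩ G.neighborSet v).ncard)) ∧
        (∀ v ∈ V₁ᶜ, Even ((V₁ᶜ ∩ G.neighborSet v).ncard))} =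
      Nat.card {Q : Set (V ⊕ {v : V // Even (G.degree v)}) //
        ∀ x, Odd ((((oddExtension G).neighborSet x ∪ {x}) ∩ Q).ncard)} :=
  Nat.card_congr
    { toFun W :=
        ⟨oddExtension.extendSet G W, (oddExtension.isOddParityCover_extendSet_iff G W).2 W.2⟩
      invFun Q := ⟨Sum.inl ⁻¹' Q.1, (oddExtension.isOddParityCover_extendSet_iff G _).1 (by
        rw [oddExtension.extendSet_preimage_inl G Q.2]; exact Q.2)⟩
      left_inv _ := rfl
      right_inv Q := Subtype.ext (oddExtension.extendSet_preimage_inl G Q.2) }
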